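/- arXiv:1512.06529 — 2 statements merged into one kernel-verified Lean document; each statement's English description precedes it below -/
import Mathlib

section
/- Let Ω ⊆ ℝ^N be a bounded domain, K ∈ L^∞(Ω × Ω) a symmetric nonnegative kernel, a bounded continuous, and λ ∈ ℝ. If ψ ∈ C(Ω) ∩ L^∞(Ω), ψ ≥ 0, ψ ≢ 0 satisfies L_Ω ψ + (a + λ)ψ ≥ 0 in Ω, then λ_v(L_Ω + a) ≤ λ, where λ_v(L_Ω + a) = inf over nonzero φ ∈ L²(Ω) of ( −∬_{Ω×Ω} K(x,y)φ(x)φ(y) dxdy − ∫_Ω a φ² ) / ‖φ‖²_{L²}. Consequently λ_v(L_Ω + a) ≤ λ_p'(L_Ω + a). -/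
open MeasureTheory Filter Metric Set
open scoped Topology

noncomputable section

/-- The set of Rayleigh-type quotients defining the variational eigenvalue
`λ_v(L_Ω + a)`: values `(−∬ K φ φ − ∫ a φ²)/‖φ‖²_{L²}` over nonzero `φ ∈ L²(Ω)`. -/
def lamVSet (N : ℕ) (Ω : Set (EuclideanSpace ℝ (Fin N)))
    (K : EuclideanSpace ℝ (Fin N) → EuclideanSpace ℝ (Fin N) → ℝ)
    (a : EuclideanSpace ℝ (Fin N) → ℝ) : Set ℝ :=
  {r | ∃ φ : EuclideanSpace ℝ (Fin N) → ℝ,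
    MemLp φ 2 (volume.restrict Ω) ∧ (∫ x in Ω, (φ x) ^ 2) ≠ 0 ∧
    r = (-(∫ x in Ω, ∫ y in Ω, K x y * φ x * φ y) - ∫ x in Ω, a x * (φ x) ^ 2) /
        (∫ x in Ω, (φ x) ^ 2)}

/-- Measurability of the parametric integral `x ↦ ∫ y in Ω, K x y * φ y`. -/
lemma aux_asm {N : ℕ} {Ω : Set (EuclideanSpace ℝ (Fin N))}
    {K : EuclideanSpace ℝ (Fin N) → EuclideanSpace ℝ (Fin N) → ℝ}
    (hKmeas : Measurable (fun p : EuclideanSpace ℝ (Fin N) × EuclideanSpace ℝ (Fin N) => K p.1 p.2))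
    {φ : EuclideanSpace ℝ (Fin N) → ℝ}
    (hφ : AEStronglyMeasurable φ (volume.restrict Ω)) :
    AEStronglyMeasurable (fun x => ∫ y in Ω, K x y * φ y) (volume.restrict Ω) := by
  set g := hφ.mk φ with hg
  have heq : ∀ x, (∫ y in Ω, K x y * φ y) = ∫ y in Ω, K x y * g y := fun x =>
    integral_congr_ae (hφ.ae_eq_mk.mono fun y hy => by simp only []; rw [hy])
  have hsm : StronglyMeasurable fun x => ∫ y in Ω, K x y * g y :=
    StronglyMeasurable.integral_prod_right'
      (f := fun p : EuclideanSpace ℝ (Fin N) × EuclideanSpace ℝ (Fin N) => K p.1 p.2 * g p.2)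
      ((hKmeas.stronglyMeasurable).mul
        (hφ.stronglyMeasurable_mk.comp_measurable measurable_snd))
  exact hsm.aestronglyMeasurable.congr (ae_of_all _ fun x => (heq x).symm)

/-- If a nonnegative nontrivial bounded continuous `ψ` satisfies
`L_Ω ψ + (a + λ)ψ ≥ 0` in the bounded domain `Ω`, then `λ_v(L_Ω + a) ≤ λ`;
consequently `λ_v(L_Ω + a) ≤ λ_p'(L_Ω + a)`. -/
theorem stmt5 (N : ℕ)
    (Ω : Set (EuclideanSpace ℝ (Fin N)))
    (K : EuclideanSpace ℝ (Fin N) → EuclideanSpace ℝ (Fin N) → ℝ)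
    (a : EuclideanSpace ℝ (Fin N) → ℝ)
    (hΩo : IsOpen Ω) (hΩc : IsConnected Ω) (hΩne : Ω.Nonempty)
    (hΩb : Bornology.IsBounded Ω)
    (hK0 : ∀ x y, 0 ≤ K x y)
    (hKsym : ∀ x y, K x y = K y x)
    (hKmeas : Measurable (fun p : EuclideanSpace ℝ (Fin N) × EuclideanSpace ℝ (Fin N) => K p.1 p.2))
    (hKB : ∃ M, ∀ x y, K x y ≤ M)
    (hac : ContinuousOn a Ω) (haB : ∃ M, ∀ x ∈ Ω, |a x| ≤ M)
    (l : ℝ)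
    (ψ : EuclideanSpace ℝ (Fin N) → ℝ)
    (hψc : ContinuousOn ψ Ω)
    (hψB : ∃ M, ∀ x ∈ Ω, |ψ x| ≤ M)
    (hψ0 : ∀ x ∈ Ω, 0 ≤ ψ x)
    (hψne : ∃ x ∈ Ω, 0 < ψ x)
    (hψ : ∀ x ∈ Ω, 0 ≤ (∫ y in Ω, K x y * ψ y) + (a x + l) * ψ x) :
    sInf (lamVSet N Ω K a) ≤ l := by
  obtain ⟨MK, hMK⟩ := hKB
  obtain ⟨Ma, hMa⟩ := haB
  obtain ⟨Mψ, hMψ⟩ := hψB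
  have hΩm : MeasurableSet Ω := hΩo.measurableSet
  have hvol : volume Ω < ⊤ := hΩb.measure_lt_top
  haveI : IsFiniteMeasure (volume.restrict Ω) :=
    ⟨by rwa [Measure.restrict_apply_univ]⟩
  set V : ℝ := (volume Ω).toReal with hVdef
  have hV0 : 0 ≤ V := ENNReal.toReal_nonneg
  have hMK0 : 0 ≤ MK := le_trans (hK0 0 0) (hMK 0 0)
  obtain ⟨x₀, hx₀Ω, hx₀⟩ := hψne
  have hMa0 : 0 ≤ Ma := le_trans (abs_nonneg _) (hMa x₀ hx₀Ω)
  -- general machinery for L² functions φ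
  have hgen : ∀ φ : EuclideanSpace ℝ (Fin N) → ℝ, MemLp φ 2 (volume.restrict Ω) →
      (∀ x, Integrable (fun y => K x y * φ x * φ y) (volume.restrict Ω)) ∧
      (∀ x, (∫ y in Ω, K x y * φ x * φ y) = φ x * ∫ y in Ω, K x y * φ y) ∧
      Integrable (fun x => ∫ y in Ω, K x y * φ x * φ y) (volume.restrict Ω) := by
    intro φ hφ
    have hφ1 : Integrable φ (volume.restrict Ω) := hφ.integrable one_le_two
    have hinner : ∀ x, Integrable (fun y => K x y * φ x * φ y) (volume.restrict Ω) := by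
      intro x
      have hb : Integrable (fun y => (MK * |φ x|) * |φ y|) (volume.restrict Ω) :=
        hφ1.abs.const_mul _
      refine hb.mono' ?_ (ae_of_all _ fun y => ?_)
      · exact (((hKmeas.comp measurable_prodMk_left).aestronglyMeasurable.mul_const
          (φ x)).mul hφ.1)
      · have h1 : |K x y * φ x * φ y| = K x y * |φ x| * |φ y| := by
          rw [abs_mul, abs_mul, abs_of_nonneg (hK0 x y)]
        rw [Real.norm_eq_abs, h1]
        exact mul_le_mul_of_nonneg_right
          (mul_le_mul_of_nonneg_right (hMK x y) (abs_nonneg (φ x))) (abs_nonneg (φ y))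
    have hpull : ∀ x, (∫ y in Ω, K x y * φ x * φ y) = φ x * ∫ y in Ω, K x y * φ y := by
      intro x
      rw [← integral_const_mul]
      exact integral_congr_ae (ae_of_all _ fun y => by ring)
    refine ⟨hinner, hpull, ?_⟩
    have hGasm := aux_asm hKmeas hφ.1
    have hIasm : AEStronglyMeasurable
        (fun x => ∫ y in Ω, K x y * φ x * φ y) (volume.restrict Ω) :=
      (hφ.1.mul hGasm).congr (ae_of_all _ fun x => (hpull x).symm)
    have hinnerK : ∀ x, Integrable (fun y => K x y * φ y) (volume.restrict Ω) := by
      intro x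
      refine (hφ1.abs.const_mul MK).mono' ?_ (ae_of_all _ fun y => ?_)
      · exact ((hKmeas.comp measurable_prodMk_left).aestronglyMeasurable.mul hφ.1)
      · rw [Real.norm_eq_abs, abs_mul, abs_of_nonneg (hK0 x y)]
        exact mul_le_mul_of_nonneg_right (hMK x y) (abs_nonneg _)
    have hGbd : ∀ x, |∫ y in Ω, K x y * φ y| ≤ MK * ∫ y in Ω, |φ y| := by
      intro x
      calc |∫ y in Ω, K x y * φ y| ≤ ∫ y in Ω, |K x y * φ y| := by
            simpa only [Real.norm_eq_abs] using
              norm_integral_le_integral_norm (μ := volume.restrict Ω) (fun y => K x y * φ y)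
        _ ≤ ∫ y in Ω, MK * |φ y| := by
            refine integral_mono (hinnerK x).abs (hφ1.abs.const_mul MK) fun y => ?_
            rw [abs_mul, abs_of_nonneg (hK0 x y)]
            exact mul_le_mul_of_nonneg_right (hMK x y) (abs_nonneg _)
        _ = MK * ∫ y in Ω, |φ y| := integral_const_mul _ _
    refine ((hφ1.abs.const_mul (MK * ∫ y in Ω, |φ y|)).mono' hIasm
      (ae_of_all _ fun x => ?_))
    rw [hpull x, Real.norm_eq_abs, abs_mul]
    calc |φ x| * |∫ y in Ω, K x y * φ y| ≤ |φ x| * (MK * ∫ y in Ω, |φ y|) :=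
          mul_le_mul_of_nonneg_left (hGbd x) (abs_nonneg _)
      _ = (MK * ∫ y in Ω, |φ y|) * |φ x| := by ring
  -- ψ is in L²
  have hψasm : AEStronglyMeasurable ψ (volume.restrict Ω) :=
    hψc.aestronglyMeasurable hΩm
  have hψL2 : MemLp ψ 2 (volume.restrict Ω) := by
    refine MemLp.of_bound hψasm Mψ ?_
    refine (ae_restrict_iff' hΩm).2 (ae_of_all _ fun x hx => ?_)
    simpa [Real.norm_eq_abs] using hMψ x hx
  have hψsq : Integrable (fun x => ψ x ^ 2) (volume.restrict Ω) := hψL2.integrable_sq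
  have haasm : AEStronglyMeasurable a (volume.restrict Ω) := hac.aestronglyMeasurable hΩm
  -- generic integrability of a * φ²
  have hBgen : ∀ φ : EuclideanSpace ℝ (Fin N) → ℝ, MemLp φ 2 (volume.restrict Ω) →
      Integrable (fun x => a x * φ x ^ 2) (volume.restrict Ω) := by
    intro φ hφ
    have hφsq : Integrable (fun x => φ x ^ 2) (volume.restrict Ω) := hφ.integrable_sq
    have hsq : AEStronglyMeasurable (fun x => φ x ^ 2) (volume.restrict Ω) :=
      (hφ.1.mul hφ.1).congr (ae_of_all _ fun x => (pow_two (φ x)).symm)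
    refine (hφsq.const_mul Ma).mono' (haasm.mul hsq) ?_
    refine (ae_restrict_iff' hΩm).2 (ae_of_all _ fun x hx => ?_)
    rw [Real.norm_eq_abs, abs_mul, abs_of_nonneg (sq_nonneg (φ x))]
    exact mul_le_mul_of_nonneg_right (hMa x hx) (sq_nonneg _)
  -- positivity of ∫ ψ²
  have hS : 0 < ∫ x in Ω, ψ x ^ 2 := by
    have hcont : ContinuousAt ψ x₀ := hψc.continuousAt (hΩo.mem_nhds hx₀Ω)
    have hnb : {x | ψ x₀ / 2 < ψ x} ∩ Ω ∈ 𝓝 x₀ :=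
      inter_mem (hcont.eventually (eventually_gt_nhds (show ψ x₀ / 2 < ψ x₀ by linarith))) (hΩo.mem_nhds hx₀Ω)
    obtain ⟨ε, hε, hball⟩ := Metric.mem_nhds_iff.1 hnb
    have hc : 0 < ψ x₀ / 2 := half_pos hx₀
    have hsub : ball x₀ ε ⊆ Ω := fun x hx => (hball hx).2
    have hblt : volume (ball x₀ ε) ≠ ⊤ := ((measure_mono hsub).trans_lt hvol).ne
    have h1 : (ψ x₀ / 2) ^ 2 * (volume (ball x₀ ε)).toReal ≤ ∫ x in ball x₀ ε, ψ x ^ 2 := by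
      refine setIntegral_ge_of_const_le_real measurableSet_ball hblt (fun x hx => ?_)
        (hψsq.mono_measure (Measure.restrict_mono hsub le_rfl))
      exact pow_le_pow_left₀ hc.le (hball hx).1.le 2
    have h2 : ∫ x in ball x₀ ε, ψ x ^ 2 ≤ ∫ x in Ω, ψ x ^ 2 :=
      setIntegral_mono_set hψsq (ae_of_all _ fun x => sq_nonneg _)
        (HasSubset.Subset.eventuallyLE hsub)
    have hb0 : 0 < (volume (ball x₀ ε)).toReal :=
      ENNReal.toReal_pos (measure_ball_pos volume x₀ hε).ne' hblt
    nlinarith [mul_pos (pow_pos hc 2) hb0]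
  obtain ⟨hinψ, hpullψ, hIψ⟩ := hgen ψ hψL2
  -- integrability of (a + l) ψ²
  have hBψ : Integrable (fun x => a x * ψ x ^ 2) (volume.restrict Ω) := hBgen ψ hψL2
  -- the key inequality: 0 ≤ A + B + l S
  have hkey : 0 ≤ (∫ x in Ω, ∫ y in Ω, K x y * ψ x * ψ y) + ((∫ x in Ω, a x * ψ x ^ 2)
      + l * ∫ x in Ω, ψ x ^ 2) := by
    have haψ : Integrable (fun x => (a x + l) * ψ x ^ 2) (volume.restrict Ω) := by
      have : (fun x => (a x + l) * ψ x ^ 2) = fun x => a x * ψ x ^ 2 + l * ψ x ^ 2 :=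
        funext fun x => by ring
      rw [this]
      exact hBψ.add (hψsq.const_mul l)
    have h0 : 0 ≤ ∫ x in Ω, ((∫ y in Ω, K x y * ψ x * ψ y) + (a x + l) * ψ x ^ 2) := by
      refine setIntegral_nonneg hΩm fun x hx => ?_
      rw [hpullψ x]
      have h2 : ψ x * (∫ y in Ω, K x y * ψ y) + (a x + l) * ψ x ^ 2
          = ψ x * ((∫ y in Ω, K x y * ψ y) + (a x + l) * ψ x) := by ring
      rw [h2]
      exact mul_nonneg (hψ0 x hx) (hψ x hx)
    rw [integral_add hIψ haψ] at h0
    have h3 : ∫ x in Ω, (a x + l) * ψ x ^ 2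
        = (∫ x in Ω, a x * ψ x ^ 2) + l * ∫ x in Ω, ψ x ^ 2 := by
      have : (fun x => (a x + l) * ψ x ^ 2) = fun x => a x * ψ x ^ 2 + l * ψ x ^ 2 :=
        funext fun x => by ring
      rw [this, integral_add hBψ (hψsq.const_mul l), integral_const_mul]
    rw [h3] at h0
    linarith
  -- membership
  have hmem : (-(∫ x in Ω, ∫ y in Ω, K x y * ψ x * ψ y) - ∫ x in Ω, a x * ψ x ^ 2) /
      (∫ x in Ω, ψ x ^ 2) ∈ lamVSet N Ω K a := ⟨ψ, hψL2, hS.ne', rfl⟩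
  have hle : (-(∫ x in Ω, ∫ y in Ω, K x y * ψ x * ψ y) - ∫ x in Ω, a x * ψ x ^ 2) /
      (∫ x in Ω, ψ x ^ 2) ≤ l := by
    rw [div_le_iff₀ hS]
    linarith
  -- lower bound for the whole set
  have hbdd : BddBelow (lamVSet N Ω K a) := by
    refine ⟨-(MK * V + Ma), fun r hr => ?_⟩
    obtain ⟨φ, hφ, hS0, rfl⟩ := hr
    obtain ⟨hinφ, hpullφ, hIφ⟩ := hgen φ hφ
    have hφsq : Integrable (fun x => φ x ^ 2) (volume.restrict Ω) := hφ.integrable_sq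
    have hSφ : 0 < ∫ x in Ω, φ x ^ 2 :=
      lt_of_le_of_ne (setIntegral_nonneg hΩm fun x _ => sq_nonneg _) (Ne.symm hS0)
    set Sφ : ℝ := ∫ x in Ω, φ x ^ 2 with hSφdef
    -- pointwise upper bound for the inner integral
    have hIub : ∀ x, (∫ y in Ω, K x y * φ x * φ y) ≤ MK / 2 * ((φ x) ^ 2 * V + Sφ) := by
      intro x
      have hRint : Integrable (fun y => MK / 2 * ((φ x) ^ 2 + (φ y) ^ 2))
          (volume.restrict Ω) := ((integrable_const _).add hφsq).const_mul _
      have hmono : (∫ y in Ω, K x y * φ x * φ y)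
          ≤ ∫ y in Ω, MK / 2 * ((φ x) ^ 2 + (φ y) ^ 2) := by
        refine integral_mono (hinφ x) hRint fun y => ?_
        have h1 := mul_nonneg (hK0 x y) (sq_nonneg (φ x - φ y))
        have h2 := mul_nonneg (sub_nonneg.2 (hMK x y))
          (add_nonneg (sq_nonneg (φ x)) (sq_nonneg (φ y)))
        nlinarith
      refine hmono.trans (le_of_eq ?_)
      rw [integral_const_mul, integral_add (integrable_const _) hφsq, setIntegral_const]
      rw [smul_eq_mul, show volume.real Ω = V from rfl, ← hSφdef]
      ring
    have hA : (∫ x in Ω, ∫ y in Ω, K x y * φ x * φ y) ≤ MK * V * Sφ := by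
      have hRint : Integrable (fun x => MK / 2 * ((φ x) ^ 2 * V + Sφ))
          (volume.restrict Ω) := (((hφsq.mul_const V)).add (integrable_const _)).const_mul _
      have := integral_mono hIφ hRint hIub
      refine this.trans (le_of_eq ?_)
      rw [integral_const_mul, integral_add (hφsq.mul_const V) (integrable_const _),
        integral_mul_const, setIntegral_const, smul_eq_mul,
        show volume.real Ω = V from rfl, ← hSφdef]
      ring
    have hB : (∫ x in Ω, a x * φ x ^ 2) ≤ Ma * Sφ := by
      have : (∫ x in Ω, a x * φ x ^ 2) ≤ ∫ x in Ω, Ma * φ x ^ 2 := by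
        refine setIntegral_mono_on (hBgen φ hφ) (hφsq.const_mul Ma) hΩm fun x hx => ?_
        exact mul_le_mul_of_nonneg_right ((le_abs_self _).trans (hMa x hx)) (sq_nonneg _)
      rwa [integral_const_mul] at this
    rw [le_div_iff₀ hSφ]
    nlinarith
  exact csInf_le_of_le hbdd hmem hle
end
end

section
/- Let J ∈ C_c(ℝ) be a probability density with compact support such that ∫_ℝ J(z) z dz > 0, and define (L_ℝ φ)(x) = ∫_ℝ J(x−y)φ(y) dy. Then λ_p'(L_ℝ) ≤ −1 < −min_{λ>0} ∫_ℝ J(z) e^{−λz} dz ≤ λ_p(L_ℝ). In particular λ_p'(L_ℝ) < λ_p(L_ℝ), so the two principal eigenvalue notions differ for the pure convolution operator on ℝ. -/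
open MeasureTheory Filter Set
open scoped Topology

noncomputable section

/-- Admissible set for `λ_p(L_ℝ)`: `λ` such that `L_ℝ φ + λφ ≤ 0` for some positive
continuous `φ`, where `(L_ℝ φ)(x) = ∫_ℝ J(x−y)φ(y) dy`. -/
def lamPSet (J : ℝ → ℝ) : Set ℝ :=
  {l | ∃ φ : ℝ → ℝ, Continuous φ ∧ (∀ x, 0 < φ x) ∧
    ∀ x, (∫ y, J (x - y) * φ y) + l * φ x ≤ 0}

/-- Admissible set for `λ_p'(L_ℝ)`: `λ` such that `L_ℝ φ + λφ ≥ 0` for some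
nonnegative, nontrivial, bounded continuous `φ`. -/
def lamP'Set (J : ℝ → ℝ) : Set ℝ :=
  {l | ∃ φ : ℝ → ℝ, Continuous φ ∧ (∃ M, ∀ x, |φ x| ≤ M) ∧ (∀ x, 0 ≤ φ x) ∧
    (∃ x, φ x ≠ 0) ∧ ∀ x, 0 ≤ (∫ y, J (x - y) * φ y) + l * φ x}

/-- Elementary quadratic bound for the exponential. -/
lemma exp_le_quad {t : ℝ} (ht : |t| ≤ 1/2) : Real.exp t ≤ 1 + t + 2 * t ^ 2 := by
  have h1 : t ≤ 1/2 := (abs_le.1 ht).2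
  have h2 : -(1/2) ≤ t := (abs_le.1 ht).1
  have hpos : (0:ℝ) < 1 - t := by linarith
  have hle : 1 - t ≤ Real.exp (-t) := by
    have := Real.add_one_le_exp (-t); linarith
  have hexp : Real.exp t ≤ 1 / (1 - t) := by
    have he : Real.exp t = 1 / Real.exp (-t) := by
      rw [Real.exp_neg, one_div, inv_inv]
    rw [he]
    exact one_div_le_one_div_of_le hpos hle
  refine hexp.trans ?_
  rw [div_le_iff₀ hpos]
  nlinarith [sq_nonneg t]

/-- For a compactly supported probability density `J` on `ℝ` with
`∫ J(z) z dz > 0`, one has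
`λ_p'(L_ℝ) ≤ −1 < −min_{λ>0} ∫ J(z)e^{−λz} dz ≤ λ_p(L_ℝ)`; in particular
`λ_p'(L_ℝ) < λ_p(L_ℝ)`. -/
theorem stmt19 (J : ℝ → ℝ)
    (hJc : Continuous J) (hJs : HasCompactSupport J)
    (hJ0 : ∀ z, 0 ≤ J z) (hJ1 : ∫ z, J z = 1)
    (hJm : 0 < ∫ z, J z * z) :
    sInf (lamP'Set J) ≤ -1 ∧
    (-1 : ℝ) < -sInf ((fun l : ℝ => ∫ z, J z * Real.exp (-(l * z))) '' Set.Ioi 0) ∧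
    -sInf ((fun l : ℝ => ∫ z, J z * Real.exp (-(l * z))) '' Set.Ioi 0) ≤ sSup (lamPSet J) ∧
    sInf (lamP'Set J) < sSup (lamPSet J) := by
  set M : ℝ → ℝ := fun l : ℝ => ∫ z, J z * Real.exp (-(l * z)) with hM
  -- basic integrability of J times a continuous function
  have hJint : ∀ f : ℝ → ℝ, Continuous f → Integrable (fun z => J z * f z) := by
    intro f hf
    exact (hJc.mul hf).integrable_of_hasCompactSupport (hJs.mul_right)
  -- kernel in y, with bounded continuous φ, is integrable
  have hker : ∀ (x : ℝ) (φ : ℝ → ℝ), Continuous φ →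
      Integrable (fun y => J (x - y) * φ y) := by
    intro x φ hφ
    have h1 : HasCompactSupport fun y => J (x - y) :=
      hJs.comp_homeomorph (Homeomorph.subLeft x)
    exact ((hJc.comp (continuous_const.sub continuous_id)).mul hφ).integrable_of_hasCompactSupport
      (h1.mul_right)
  -- ∫ J (x - y) dy = 1
  have hconv1 : ∀ x : ℝ, (∫ y, J (x - y)) = 1 := by
    intro x
    rw [MeasureTheory.integral_sub_left_eq_self J (volume) x, hJ1]
  -- convolution with exponentials
  have hconvexp : ∀ (l x : ℝ), (∫ y, J (x - y) * Real.exp (l * y))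
      = Real.exp (l * x) * M l := by
    intro l x
    have key : ∀ y : ℝ, J (x - y) * Real.exp (l * y)
        = (fun z => J z * (Real.exp (l * x) * Real.exp (-(l * z)))) (x - y) := by
      intro y
      simp only [← Real.exp_add]
      congr 2
      ring
    calc (∫ y, J (x - y) * Real.exp (l * y))
        = ∫ y, (fun z => J z * (Real.exp (l * x) * Real.exp (-(l * z)))) (x - y) := by
          simp_rw [key]
      _ = ∫ z, J z * (Real.exp (l * x) * Real.exp (-(l * z))) :=
          MeasureTheory.integral_sub_left_eq_self
            (fun z => J z * (Real.exp (l * x) * Real.exp (-(l * z)))) (volume) x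
      _ = Real.exp (l * x) * M l := by
          rw [hM]
          simp only [← MeasureTheory.integral_const_mul]
          congr 1; funext z; ring
  -- M l ≥ 0
  have hMnonneg : ∀ l, 0 ≤ M l := by
    intro l
    apply integral_nonneg
    intro z
    exact mul_nonneg (hJ0 z) (Real.exp_nonneg _)
  -- lamP'Set bounded below by -1
  have hP'bdd : ∀ l ∈ lamP'Set J, -1 ≤ l := by
    rintro l ⟨φ, hφc, ⟨Mb, hMb⟩, hφ0, ⟨x₀, hx₀⟩, hineq⟩
    by_contra hl
    push_neg at hl
    -- sup of φ
    have hbdd : BddAbove (Set.range φ) := ⟨Mb, by rintro _ ⟨x, rfl⟩; exact (abs_le.1 (hMb x)).2⟩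
    set S := sSup (Set.range φ) with hS
    have hle : ∀ x, φ x ≤ S := fun x => le_csSup hbdd ⟨x, rfl⟩
    have hS0 : 0 < S := lt_of_lt_of_le (lt_of_le_of_ne (hφ0 x₀) (Ne.symm hx₀)) (hle x₀)
    -- ∫ J(x-y) φ(y) dy ≤ S
    have hintle : ∀ x, (∫ y, J (x - y) * φ y) ≤ S := by
      intro x
      have h1 : (∫ y, J (x - y) * φ y) ≤ ∫ y, J (x - y) * S := by
        apply integral_mono (hker x φ hφc)
        · exact (hker x (fun _ => S) continuous_const)
        · intro y
          exact mul_le_mul_of_nonneg_left (hle y) (hJ0 _)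
      calc (∫ y, J (x - y) * φ y) ≤ ∫ y, J (x - y) * S := h1
        _ = (∫ y, J (x - y)) * S := by rw [← integral_mul_const]
        _ = S := by rw [hconv1]; ring
    -- so -l φ x ≤ S for all x, hence φ x ≤ S / (-l) for all x
    have hkey : ∀ x, φ x ≤ S / (-l) := by
      intro x
      have h := hineq x
      have h2 : -l * φ x ≤ S := by
        have := hintle x
        nlinarith
      rw [le_div_iff₀ (by linarith : (0:ℝ) < -l)]
      linarith [h2]
    have : S ≤ S / (-l) := csSup_le ⟨φ x₀, ⟨x₀, rfl⟩⟩ (by rintro _ ⟨x, rfl⟩; exact hkey x)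
    have hlt : S / (-l) < S := by
      rw [div_lt_iff₀ (by linarith : (0:ℝ) < -l)]
      nlinarith
    linarith
  -- -1 ∈ lamP'Set via φ ≡ 1
  have hP'mem : (-1 : ℝ) ∈ lamP'Set J := by
    refine ⟨fun _ => 1, continuous_const, ⟨1, fun _ => by norm_num⟩, fun _ => zero_le_one,
      ⟨0, one_ne_zero⟩, fun x => ?_⟩
    simp only [mul_one]
    rw [hconv1 x]
    norm_num
  have h1 : sInf (lamP'Set J) ≤ -1 := csInf_le ⟨-1, fun l hl => hP'bdd l hl⟩ hP'mem
  -- set m = sInf (M '' Ioi 0)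
  set m := sInf (M '' Set.Ioi 0) with hm
  have hmbdd : BddBelow (M '' Set.Ioi 0) := ⟨0, by rintro _ ⟨l, _, rfl⟩; exact hMnonneg l⟩
  -- m < 1
  have hm1 : m < 1 := by
    -- choose R with supp J ⊆ [-R, R], R ≥ 1
    obtain ⟨R, hR⟩ := (hJs.isCompact.isBounded).subset_closedBall 0
    set R' := max R 1 with hR'
    have hR'1 : (1:ℝ) ≤ R' := le_max_right _ _
    have hR'0 : (0:ℝ) < R' := lt_of_lt_of_le one_pos hR'1
    have hsupp : ∀ z, R' < |z| → J z = 0 := by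
      intro z hz
      by_contra h
      have : z ∈ tsupport J := subset_tsupport J (by simpa using h)
      have := hR this
      simp only [Metric.mem_closedBall, Real.dist_eq, sub_zero] at this
      have : |z| ≤ R' := this.trans (le_max_left _ _)
      linarith
    set a := ∫ z, J z * z with ha
    set l₀ := min (1/(2*R')) (a/(4*R'^2)) with hl₀
    have hl₀pos : 0 < l₀ := lt_min (by positivity) (by positivity)
    have hl₀R : l₀ * R' ≤ 1/2 := by
      have := min_le_left (1/(2*R')) (a/(4*R'^2))
      calc l₀ * R' ≤ (1/(2*R')) * R' := by nlinarith
        _ = 1/2 := by field_simp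
    -- pointwise bound
    have hpt : ∀ z, J z * Real.exp (-(l₀ * z)) ≤ J z * (1 - l₀ * z + 2 * l₀^2 * R'^2) := by
      intro z
      rcases le_or_gt (|z|) R' with hz | hz
      · apply mul_le_mul_of_nonneg_left _ (hJ0 z)
        have habs : |(-(l₀ * z))| ≤ 1/2 := by
          rw [abs_neg, abs_mul, abs_of_pos hl₀pos]
          calc l₀ * |z| ≤ l₀ * R' := by nlinarith
            _ ≤ 1/2 := hl₀R
        have := exp_le_quad habs
        have hz2 : z^2 ≤ R'^2 := by nlinarith [abs_nonneg z, sq_abs z]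
        nlinarith [sq_nonneg (l₀*z)]
      · rw [hsupp z hz]; simp
    -- integrate
    have hMl₀ : M l₀ ≤ 1 - l₀ * a + 2 * l₀^2 * R'^2 := by
      have hc2 : Continuous (fun z : ℝ => 1 - l₀ * z + 2 * l₀^2 * R'^2) :=
        ((continuous_const.sub (continuous_const.mul continuous_id)).add continuous_const)
      have hce : Continuous (fun z : ℝ => Real.exp (-(l₀ * z))) :=
        Real.continuous_exp.comp ((continuous_const.mul continuous_id).neg)
      have hint2 : Integrable (fun z => J z * (1 - l₀ * z + 2 * l₀^2 * R'^2)) :=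
        hJint _ hc2
      have := integral_mono (hJint _ hce) hint2 hpt
      refine this.trans_eq ?_
      have e1 : (fun z => J z * (1 - l₀ * z + 2 * l₀^2 * R'^2))
          = fun z => (J z * (1 + 2 * l₀^2 * R'^2)) - l₀ * (J z * z) := by
        funext z; ring
      rw [e1, integral_sub ((hJint _ (continuous_const : Continuous fun _ : ℝ => (1 + 2*l₀^2*R'^2))))
        (((hJint (fun z => z) (continuous_id'))).const_mul l₀)]
      rw [integral_const_mul, integral_mul_const, hJ1, ← ha]
      ring
    have hfin : M l₀ < 1 := by
      have hmul : l₀ * (4*R'^2) ≤ a := by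
        have hmin := min_le_right (1/(2*R')) (a/(4*R'^2))
        exact (le_div_iff₀ (by positivity : (0:ℝ) < 4*R'^2)).mp hmin
      have h2 : 2 * l₀^2 * R'^2 ≤ l₀ * a / 2 := by
        nlinarith [mul_le_mul_of_nonneg_left hmul hl₀pos.le]
      nlinarith [mul_pos hl₀pos hJm]
    calc m ≤ M l₀ := csInf_le hmbdd ⟨l₀, hl₀pos, rfl⟩
      _ < 1 := hfin
  have h2 : (-1:ℝ) < -m := by linarith
  -- lamPSet bounded above by 0
  have hPbdd : BddAbove (lamPSet J) := by
    refine ⟨0, ?_⟩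
    rintro l ⟨φ, hφc, hφ0, hineq⟩
    have h := hineq 0
    have hint0 : 0 ≤ ∫ y, J (0 - y) * φ y :=
      integral_nonneg fun y => mul_nonneg (hJ0 _) (hφ0 y).le
    nlinarith [hφ0 0]
  -- -M l ∈ lamPSet for l > 0
  have hPmem : ∀ l : ℝ, 0 < l → (-(M l)) ∈ lamPSet J := by
    intro l hl
    refine ⟨fun x => Real.exp (l * x),
      Real.continuous_exp.comp (continuous_const.mul continuous_id),
      fun x => Real.exp_pos _, fun x => ?_⟩
    rw [hconvexp l x]
    exact le_of_eq (by ring)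
  -- -m ≤ sSup lamPSet
  have h3 : -m ≤ sSup (lamPSet J) := by
    rw [neg_le]
    refine le_csInf ⟨M 1, ⟨1, Set.mem_Ioi.mpr one_pos, rfl⟩⟩ ?_
    rintro _ ⟨l, hl, rfl⟩
    have := le_csSup hPbdd (hPmem l hl)
    linarith
  exact ⟨h1, h2, h3, lt_of_le_of_lt h1 (lt_of_lt_of_le h2 h3)⟩
end
end
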